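/- arXiv:1206.2251 — 6 statements merged into one kernel-verified Lean document; each statement's English description precedes it below -/
import Mathlib

section
/- Let (H_N) be a sequence of standard symmetric Wigner matrices of size N built from fixed distributions ν (off-diagonal) and ν̃ (diagonal). If it is NOT the case that lim_{s→∞} s⁴·P(|x₁₂| ≥ s) = 0, then limsup_{N→∞} P(λ_N(H_N) ≥ 3) > 0. -/
open MeasureTheory ProbabilityTheory Filter

/-- The largest eigenvalue of a real matrix, defined as the supremum of the set of its
(real) eigenvalues. -/
noncomputable def maxEig {N : ℕ} (A : Matrix (Fin N) (Fin N) ℝ) : ℝ :=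
  sSup {t : ℝ | ∃ v : Fin N → ℝ, v ≠ 0 ∧ A.mulVec v = t • v}

/-- The standard symmetric Wigner matrix of size `N` built from the array `x` of random
variables: `(H_N)_{ij} = N^{-1/2} x_{ij}` (with `x` symmetrized via `min`/`max`). -/
noncomputable def wignerMat {Ω : Type} (x : ℕ → ℕ → Ω → ℝ) (N : ℕ) (ω : Ω) :
    Matrix (Fin N) (Fin N) ℝ :=
  Matrix.of fun i j : Fin N =>
    ((N : ℝ) ^ (-(1 / 2 : ℝ))) * x (min i.1 j.1) (max i.1 j.1) ω

open scoped RealInnerProductSpace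

lemma rayleigh_le_maxEig {n : ℕ} (A : Matrix (Fin n) (Fin n) ℝ) (hA : A.IsHermitian)
    (i j : Fin n) (hij : i ≠ j) :
    (A i i + A j j) / 2 + |A i j| ≤ maxEig A := by
  haveI : Nonempty (Fin n) := ⟨i⟩
  set T : EuclideanSpace ℝ (Fin n) →ₗ[ℝ] EuclideanSpace ℝ (Fin n) := Matrix.toEuclideanLin A
    with hTdef
  have hT : T.IsSymmetric := Matrix.isHermitian_iff_isSymmetric.1 hA
  have hTapp : ∀ (v : EuclideanSpace ℝ (Fin n)) (k : Fin n), T v k = ∑ l, A k l * v l := by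
    intro v k; rfl
  set T' := LinearMap.toContinuousLinearMap T with hT'def
  have hT'app : ∀ v, T' v = T v := fun v => rfl
  set C := ‖T'‖ with hC
  have hbound : ∀ v : EuclideanSpace ℝ (Fin n), ⟪T v, v⟫ ≤ C * ‖v‖ ^ 2 := by
    intro v
    calc ⟪T v, v⟫ ≤ ‖T v‖ * ‖v‖ := real_inner_le_norm _ _
    _ ≤ (C * ‖v‖) * ‖v‖ := by
        apply mul_le_mul_of_nonneg_right _ (norm_nonneg v)
        rw [← hT'app]; exact T'.le_opNorm v
    _ = C * ‖v‖ ^ 2 := by ring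
  -- inner product formula
  have hinner : ∀ v w : EuclideanSpace ℝ (Fin n), ⟪v, w⟫ = ∑ k, v k * w k := by
    intro v w
    simp [PiLp.inner_apply, RCLike.inner_apply, mul_comm]
  -- the eigenvalue set is bounded above by C
  have hBdd : ∀ t ∈ {t : ℝ | ∃ v : Fin n → ℝ, v ≠ 0 ∧ A.mulVec v = t • v}, t ≤ C := by
    rintro t ⟨v, hv, hAv⟩
    set u : EuclideanSpace ℝ (Fin n) := (WithLp.equiv 2 (Fin n → ℝ)).symm v with hu
    have hu0 : u ≠ 0 := by
      simpa [hu] using hv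
    have hTu : T u = t • u := by
      ext k
      have : T u k = A.mulVec v k := by rw [hTapp]; rfl
      rw [this, hAv]; rfl
    have h1 : ⟪T u, u⟫ = t * ‖u‖ ^ 2 := by
      rw [hTu, real_inner_smul_left, real_inner_self_eq_norm_sq]
    have h2 := hbound u
    rw [h1] at h2
    have hupos : 0 < ‖u‖ ^ 2 := by
      have := norm_pos_iff.2 hu0
      positivity
    exact le_of_mul_le_mul_right (by linarith) hupos
  have hBddS : BddAbove {t : ℝ | ∃ v : Fin n → ℝ, v ≠ 0 ∧ A.mulVec v = t • v} := ⟨C, hBdd⟩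
  -- the top eigenvalue
  have key := hT.hasEigenvalue_iSup_of_finiteDimensional
  set μ : ℝ := (⨆ x : { x : EuclideanSpace ℝ (Fin n) // x ≠ 0 },
      RCLike.re ⟪T x, x⟫ / ‖(x : EuclideanSpace ℝ (Fin n))‖ ^ 2 : ℝ) with hμ
  obtain ⟨w, hw⟩ := key.exists_hasEigenvector
  have hw0 : (w : Fin n → ℝ) ≠ 0 := fun h => hw.2 (by ext k; exact congrFun h k)
  have hwe : A.mulVec (w : Fin n → ℝ) = μ • (w : Fin n → ℝ) := by
    funext k
    have h1 : A.mulVec (w : Fin n → ℝ) k = T w k := by rw [hTapp]; rfl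
    have h2 := congrFun (congrArg (fun z : EuclideanSpace ℝ (Fin n) => (z : Fin n → ℝ))
      hw.apply_eq_smul) k
    rw [h1]
    exact h2
  have hμS : μ ∈ {t : ℝ | ∃ v : Fin n → ℝ, v ≠ 0 ∧ A.mulVec v = t • v} := ⟨w, hw0, hwe⟩
  -- test vector
  set σ : ℝ := if 0 ≤ A i j then 1 else -1 with hσ
  set v₀ : EuclideanSpace ℝ (Fin n) :=
    (WithLp.equiv 2 (Fin n → ℝ)).symm (fun k => if k = i then 1 else if k = j then σ else 0)
    with hv₀
  have hv₀app : ∀ k, v₀ k = if k = i then 1 else if k = j then σ else 0 := fun k => rfl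
  have hsum : ∀ f : Fin n → ℝ, (∑ k, f k * v₀ k) = f i + σ * f j := by
    intro f
    have : ∀ k, f k * v₀ k = (if k = i then f k else 0) + (if k = j then σ * f k else 0) := by
      intro k
      rw [hv₀app]
      by_cases h1 : k = i
      · subst h1; simp [hij]
      · by_cases h2 : k = j <;> simp [h1, h2, Ne.symm hij, mul_comm]
    simp only [this, Finset.sum_add_distrib, Finset.sum_ite_eq', Finset.mem_univ, if_true]
  have hσsq : σ * σ = 1 := by rw [hσ]; split <;> norm_num
  have hσabs : σ * A i j = |A i j| := by
    rw [hσ]; split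
    · rw [abs_of_nonneg ‹_›]; ring
    · rw [abs_of_neg (lt_of_not_ge ‹_›)]; ring
  have hAji : A j i = A i j := by
    have := congrFun (congrFun hA.symm i) j
    simpa [Matrix.conjTranspose_apply] using this.symm
  have hnum : ⟪T v₀, v₀⟫ = A i i + A j j + 2 * |A i j| := by
    rw [hinner, hsum (fun k => T v₀ k)]
    have hTk : ∀ k, T v₀ k = A k i + σ * A k j := by
      intro k
      rw [hTapp]
      have := hsum (fun l => A k l)
      simpa [mul_comm] using this
    rw [hTk i, hTk j, hAji]
    linear_combination 2 * hσabs + A j j * hσsq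
  have hden : ‖v₀‖ ^ 2 = 2 := by
    rw [← real_inner_self_eq_norm_sq, hinner, hsum (fun k => v₀ k), hv₀app, hv₀app]
    simp [Ne.symm hij]
    linarith [hσsq]
  have hv₀0 : v₀ ≠ 0 := by
    intro h
    have h1 := hv₀app i
    rw [h] at h1
    simp at h1
  -- μ ≥ rayleigh at v₀
  have hray : (A i i + A j j) / 2 + |A i j| ≤ μ := by
    have hb : BddAbove (Set.range fun x : { x : EuclideanSpace ℝ (Fin n) // x ≠ 0 } =>
        RCLike.re ⟪T x, x⟫ / ‖(x : EuclideanSpace ℝ (Fin n))‖ ^ 2) := by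
      refine ⟨C, ?_⟩
      rintro y ⟨⟨v, hv⟩, rfl⟩
      have hvpos : 0 < ‖v‖ ^ 2 := by
        have : ‖v‖ ≠ 0 := fun h => hv (norm_eq_zero.1 h)
        positivity
      rw [div_le_iff₀ hvpos]
      simpa using hbound v
    have := le_ciSup hb ⟨v₀, hv₀0⟩
    rw [← hμ] at this
    refine le_trans ?_ this
    simp only [RCLike.re_to_real] at *
    rw [hnum, hden]
    ring_nf
    linarith
  exact le_trans hray (le_csSup hBddS hμS)

lemma wigner_isHermitian {Ω : Type} (x : ℕ → ℕ → Ω → ℝ) (n : ℕ) (ω : Ω) :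
    (wignerMat x n ω).IsHermitian := by
  ext i j
  simp [wignerMat, Matrix.conjTranspose_apply, min_comm, max_comm]

lemma event_maxEig {Ω : Type} (x : ℕ → ℕ → Ω → ℝ) (n : ℕ) (ω : Ω) (K : ℝ) (hK : 0 ≤ K)
    (i j : ℕ) (hij : i < j) (hjn : j < n)
    (hoff : (K + 3) * Real.sqrt n ≤ |x i j ω|)
    (hdiag : ∀ k < n, |x k k ω| < K * Real.sqrt n) :
    3 ≤ maxEig (wignerMat x n ω) := by
  set A := wignerMat x n ω with hA
  have hn : 0 < n := lt_trans (Nat.zero_lt_of_lt hij) hjn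
  set c : ℝ := (n : ℝ) ^ (-(1 / 2 : ℝ)) with hc
  have hnpos : (0 : ℝ) < n := by exact_mod_cast hn
  have hcpos : 0 < c := Real.rpow_pos_of_pos hnpos _
  have hcs : c * Real.sqrt n = 1 := by
    rw [hc, Real.sqrt_eq_rpow, ← Real.rpow_add hnpos]
    norm_num
  set I : Fin n := ⟨i, lt_trans hij hjn⟩ with hI
  set J : Fin n := ⟨j, hjn⟩ with hJ
  have hIJ : I ≠ J := by
    intro h
    exact absurd (congrArg Fin.val h) (Nat.ne_of_lt hij)
  have key := rayleigh_le_maxEig A (wigner_isHermitian x n ω) I J hIJ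
  have hAIJ : A I J = c * x i j ω := by
    have h0 : A I J = c * x (min i j) (max i j) ω := rfl
    rw [h0, min_eq_left hij.le, max_eq_right hij.le]
  have hAII : A I I = c * x i i ω := by
    have h0 : A I I = c * x (min i i) (max i i) ω := rfl
    simpa using h0
  have hAJJ : A J J = c * x j j ω := by
    have h0 : A J J = c * x (min j j) (max j j) ω := rfl
    simpa using h0
  have habs : K + 3 ≤ |A I J| := by
    rw [hAIJ, abs_mul, abs_of_pos hcpos]
    calc K + 3 = (K + 3) * (c * Real.sqrt n) := by rw [hcs]; ring
    _ = c * ((K + 3) * Real.sqrt n) := by ring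
    _ ≤ c * |x i j ω| := by
        exact mul_le_mul_of_nonneg_left hoff hcpos.le
  have hdbound : ∀ k (hk : k < n), -K ≤ c * x k k ω := by
    intro k hk
    have h1 := hdiag k hk
    have h2 : c * |x k k ω| ≤ c * (K * Real.sqrt n) :=
      mul_le_mul_of_nonneg_left (h1.le) hcpos.le
    have h3 : c * (K * Real.sqrt n) = K := by
      calc c * (K * Real.sqrt n) = K * (c * Real.sqrt n) := by ring
      _ = K := by rw [hcs]; ring
    have h4 : |c * x k k ω| ≤ K := by
      rw [abs_mul, abs_of_pos hcpos]; linarith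
    linarith [neg_abs_le (c * x k k ω)]
  have hII := hdbound i (lt_trans hij hjn)
  have hJJ := hdbound j hjn
  rw [hAII, hAJJ] at key
  linarith

lemma cheb_tail (μ : Measure ℝ) [IsProbabilityMeasure μ]
    (h2 : Integrable (fun t => t ^ 2) μ) (a : ℝ) (ha : 0 < a) :
    (μ {t : ℝ | a ≤ |t|}).toReal ≤ (∫ t, t ^ 2 ∂μ) / a ^ 2 := by
  set S : Set ℝ := {t : ℝ | a ≤ |t|} with hSdef
  have hS : MeasurableSet S := measurableSet_le measurable_const measurable_id.abs
  have h1 : a ^ 2 * (μ S).toReal = ∫ _ in S, a ^ 2 ∂μ := by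
    rw [setIntegral_const, smul_eq_mul, mul_comm]; rfl
  have h2' : (∫ _ in S, a ^ 2 ∂μ) ≤ ∫ t in S, t ^ 2 ∂μ := by
    refine setIntegral_mono_on (integrableOn_const (measure_ne_top _ _))
      h2.integrableOn hS ?_
    intro t ht
    have : a ≤ |t| := ht
    calc a ^ 2 ≤ |t| ^ 2 := by nlinarith [abs_nonneg t]
    _ = t ^ 2 := sq_abs t
  have h3 : (∫ t in S, t ^ 2 ∂μ) ≤ ∫ t, t ^ 2 ∂μ :=
    setIntegral_le_integral h2 (Filter.Eventually.of_forall fun t => sq_nonneg t)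
  rw [le_div_iff₀ (by positivity : (0:ℝ) < a ^ 2)]
  nlinarith [h1, h2', h3]

lemma prob_pre_lt (μ : Measure ℝ) [IsProbabilityMeasure μ] (c : ℝ) :
    (μ {t : ℝ | |t| < c}).toReal = 1 - (μ {t : ℝ | c ≤ |t|}).toReal := by
  have hS : MeasurableSet {t : ℝ | |t| < c} :=
    measurableSet_lt measurable_id.abs measurable_const
  have hc : {t : ℝ | |t| < c}ᶜ = {t : ℝ | c ≤ |t|} := by ext t; simp [not_lt]
  have h0 := measure_add_measure_compl (μ := μ) hS
  rw [hc] at h0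
  have h1 : (μ {t : ℝ | |t| < c}).toReal + (μ {t : ℝ | c ≤ |t|}).toReal = 1 := by
    rw [← ENNReal.toReal_add (measure_ne_top _ _) (measure_ne_top _ _), h0]; simp
  linarith

lemma half_le_pow (a : ℝ) (k : ℕ) (h0 : 0 ≤ a) (h1 : a ≤ 1) (h : (k : ℝ) * a ≤ 1 / 2) :
    (1 : ℝ) / 2 ≤ (1 - a) ^ k := by
  have h2 := one_add_mul_le_pow (by linarith : (-2 : ℝ) ≤ -a) k
  have h3 : 1 + (k : ℝ) * (-a) = 1 - (k : ℝ) * a := by ring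
  calc (1 : ℝ) / 2 ≤ 1 - (k : ℝ) * a := by linarith
  _ = 1 + (k : ℝ) * (-a) := by ring
  _ ≤ (1 + -a) ^ k := h2
  _ = (1 - a) ^ k := by ring_nf

lemma one_sub_pow_le (a : ℝ) (k : ℕ) (h0 : 0 ≤ a) (h1 : a ≤ 1) (b : ℝ) (hb : 0 ≤ b)
    (hble : b ≤ (k : ℝ) * a) : (1 - a) ^ k ≤ 1 / (1 + b) := by
  have ha : (0 : ℝ) ≤ 1 - a := by linarith
  have hbnd : 1 + (k : ℝ) * a ≤ (1 + a) ^ k :=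
    one_add_mul_le_pow (by linarith : (-2 : ℝ) ≤ a) k
  have hab : (1 - a) ^ k * (1 + a) ^ k ≤ 1 := by
    rw [← mul_pow]
    have he : (1 - a) * (1 + a) = 1 - a ^ 2 := by ring
    rw [he]
    apply pow_le_one₀ (by nlinarith) (by nlinarith)
  have hbpos : (0 : ℝ) < 1 + (k : ℝ) * a := by positivity
  have h5 : (1 - a) ^ k * (1 + (k : ℝ) * a) ≤ 1 := by
    calc (1 - a) ^ k * (1 + (k : ℝ) * a) ≤ (1 - a) ^ k * (1 + a) ^ k :=
        mul_le_mul_of_nonneg_left hbnd (by positivity)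
    _ ≤ 1 := hab
  have h6 : (1 - a) ^ k ≤ 1 / (1 + (k : ℝ) * a) := by
    rw [le_div_iff₀ hbpos]; exact h5
  calc (1 - a) ^ k ≤ 1 / (1 + (k : ℝ) * a) := h6
  _ ≤ 1 / (1 + b) := by
      apply one_div_le_one_div_of_le (by linarith)
      linarith

lemma sq_ratio_bound (a b : ℝ) (ha : 1 ≤ a) (hb : 0 ≤ b) :
    b * (2 * a + 2) ^ 2 ≤ a * a * (16 * b) := by
  nlinarith [mul_nonneg hb (mul_nonneg (by linarith : (0:ℝ) ≤ 3 * a + 1)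
    (by linarith : (0:ℝ) ≤ a - 1))]

set_option maxHeartbeats 1000000 in
/-- **Necessary condition for edge universality.**  Let `(H_N)` be standard symmetric
Wigner matrices with off-diagonal entry distribution `ν` (centered, unit variance) and
diagonal distribution `ν'` (centered, finite variance).  If it is NOT the case that
`s⁴ P(|x₁₂| ≥ s) → 0` as `s → ∞`, then `limsup_N P(λ_N(H_N) ≥ 3) > 0`. -/
theorem stmt_0 {Ω : Type} [MeasureSpace Ω] [IsProbabilityMeasure (ℙ : Measure Ω)]
    (ν ν' : Measure ℝ) [IsProbabilityMeasure ν] [IsProbabilityMeasure ν']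
    (hν_int1 : Integrable (fun t => t) ν) (hν_mean : ∫ t, t ∂ν = 0)
    (hν_int2 : Integrable (fun t => t ^ 2) ν) (hν_var : ∫ t, t ^ 2 ∂ν = 1)
    (hν'_int1 : Integrable (fun t => t) ν') (hν'_mean : ∫ t, t ∂ν' = 0)
    (hν'_int2 : Integrable (fun t => t ^ 2) ν')
    (x : ℕ → ℕ → Ω → ℝ)
    (hmeas : ∀ i j, Measurable (x i j))
    (hindep : iIndepFun
      (fun p : {p : ℕ × ℕ // p.1 ≤ p.2} => x p.1.1 p.1.2) ℙ)
    (hlawOff : ∀ i j : ℕ, i < j → Measure.map (x i j) ℙ = ν)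
    (hlawDiag : ∀ i : ℕ, Measure.map (x i i) ℙ = ν')
    (htail : ¬ Tendsto (fun s : ℝ => s ^ 4 * (ν {t | s ≤ |t|}).toReal) atTop (nhds 0)) :
    0 < Filter.limsup
      (fun N : ℕ => (ℙ {ω | 3 ≤ maxEig (wignerMat x N ω)}).toReal) atTop := by
  classical
  have hb1 : ∀ S : Set Ω, (ℙ S).toReal ≤ 1 := by
    intro S
    calc (ℙ S).toReal ≤ (1 : ENNReal).toReal :=
        ENNReal.toReal_mono (by simp) prob_le_one
    _ = 1 := by simp
  -- constants
  set E2 : ℝ := ∫ t, t ^ 2 ∂ν' with hE2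
  have hE2nn : 0 ≤ E2 := integral_nonneg fun t => sq_nonneg t
  set K : ℝ := Real.sqrt (2 * E2 + 2) with hKdef
  have hKpos : 0 < K := Real.sqrt_pos.2 (by linarith)
  have hKsq : K ^ 2 = 2 * E2 + 2 := Real.sq_sqrt (by linarith)
  clear_value K
  -- extract ε
  obtain ⟨ε, hε, hfreq⟩ :
      ∃ ε > 0, ∃ᶠ s in atTop, ε ≤ s ^ 4 * (ν {t | s ≤ |t|}).toReal := by
    rw [Metric.tendsto_nhds] at htail
    push_neg at htail
    obtain ⟨ε, hε, h⟩ := htail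
    refine ⟨ε, hε, h.mono fun s hs => ?_⟩
    rw [Real.dist_eq, sub_zero] at hs
    have h0 : 0 ≤ s ^ 4 * (ν {t | s ≤ |t|}).toReal := by positivity
    rwa [abs_of_nonneg h0] at hs
  set β : ℝ := ε / (16 * (K + 3) ^ 4) with hβdef
  have hβpos : 0 < β := by positivity
  set c : ℝ := (1 / 2) * (β / (1 + β)) with hcdef
  have hcpos : 0 < c := by positivity
  have key : ∀ M : ℕ, ∃ n ≥ M, c ≤ (ℙ {ω | 3 ≤ maxEig (wignerMat x n ω)}).toReal := by
    intro M
    obtain ⟨s, hsge, hstail⟩ :=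
      frequently_atTop.1 hfreq (max 1 ((K + 3) * Real.sqrt (2 * ((M : ℝ) + 2))))
    have hs1 : (1 : ℝ) ≤ s := le_trans (le_max_left _ _) hsge
    have hs2 : (K + 3) * Real.sqrt (2 * ((M : ℝ) + 2)) ≤ s := le_trans (le_max_right _ _) hsge
    have hspos : 0 < s := lt_of_lt_of_le one_pos hs1
    set u : ℝ := s ^ 2 / (2 * (K + 3) ^ 2) with hudef
    have hupos : 0 < u := by positivity
    set m : ℕ := ⌊u⌋₊ with hmdef
    set n : ℕ := 2 * m with hndef
    -- m ≥ M + 2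
    have hmge : M + 2 ≤ m := by
      apply Nat.le_floor
      have h1 : 0 ≤ Real.sqrt (2 * ((M : ℝ) + 2)) := Real.sqrt_nonneg _
      have h2 : ((K + 3) * Real.sqrt (2 * ((M : ℝ) + 2))) ^ 2 ≤ s ^ 2 := by
        apply sq_le_sq' _ hs2
        nlinarith
      rw [mul_pow, Real.sq_sqrt (by positivity : (0:ℝ) ≤ 2 * ((M : ℝ) + 2))] at h2
      rw [hudef, le_div_iff₀ (by positivity : (0:ℝ) < 2 * (K + 3) ^ 2)]
      push_cast
      nlinarith
    have hm1 : 1 ≤ m := le_trans (by omega) hmge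
    have hnM : M ≤ n := by omega
    have hn2 : 2 ≤ n := by omega
    have hmR : (1 : ℝ) ≤ (m : ℝ) := by exact_mod_cast hm1
    have hnR : (n : ℝ) = 2 * m := by push_cast [hndef]; ring
    have hnRpos : (0 : ℝ) < n := by rw [hnR]; linarith
    have hsqn : 0 < Real.sqrt n := Real.sqrt_pos.2 hnRpos
    -- threshold comparison : (K+3) √n ≤ s
    have hmu : (m : ℝ) ≤ u := Nat.floor_le hupos.le
    have hum : u < (m : ℝ) + 1 := Nat.lt_floor_add_one u
    clear_value m
    clear_value u
    rw [hudef] at hmu hum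
    have hthr : (K + 3) * Real.sqrt n ≤ s := by
      have h1 : (K + 3) ^ 2 * (n : ℝ) ≤ s ^ 2 := by
        have h1' : (m : ℝ) * (2 * (K + 3) ^ 2) ≤ s ^ 2 := by
          rw [← le_div_iff₀ (by positivity : (0:ℝ) < 2 * (K + 3) ^ 2)]
          exact hmu
        rw [hnR]; nlinarith
      have h2 : (K + 3) * Real.sqrt n = Real.sqrt ((K + 3) ^ 2 * n) := by
        rw [Real.sqrt_mul (by positivity), Real.sqrt_sq (by positivity)]
      rw [h2]
      calc Real.sqrt ((K + 3) ^ 2 * n) ≤ Real.sqrt (s ^ 2) := Real.sqrt_le_sqrt h1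
      _ = s := Real.sqrt_sq hspos.le
    -- s^4 upper bound
    have hs4 : s ^ 4 ≤ (K + 3) ^ 4 * ((n : ℝ) + 2) ^ 2 := by
      have h2 : s ^ 2 ≤ (K + 3) ^ 2 * ((n : ℝ) + 2) := by
        rw [div_lt_iff₀ (by positivity : (0:ℝ) < 2 * (K + 3) ^ 2)] at hum
        rw [hnR]; nlinarith
      calc s ^ 4 = (s ^ 2) ^ 2 := by ring
      _ ≤ ((K + 3) ^ 2 * ((n : ℝ) + 2)) ^ 2 := by nlinarith
      _ = (K + 3) ^ 4 * ((n : ℝ) + 2) ^ 2 := by ring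
    -- tail quantities
    set qR : ℝ := (ν {t : ℝ | (K + 3) * Real.sqrt n ≤ |t|}).toReal with hqRdef
    set δR : ℝ := (ν' {t : ℝ | K * Real.sqrt n ≤ |t|}).toReal with hδRdef
    have hqnn : 0 ≤ qR := ENNReal.toReal_nonneg
    have hδnn : 0 ≤ δR := ENNReal.toReal_nonneg
    have hq1 : qR ≤ 1 := by
      calc qR ≤ (1 : ENNReal).toReal := ENNReal.toReal_mono (by simp) prob_le_one
      _ = 1 := by simp
    have hδ1 : δR ≤ 1 := by
      calc δR ≤ (1 : ENNReal).toReal := ENNReal.toReal_mono (by simp) prob_le_one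
      _ = 1 := by simp
    -- lower bound on qR
    have hqlow : ε ≤ (K + 3) ^ 4 * ((n : ℝ) + 2) ^ 2 * qR := by
      have hmono : (ν {t : ℝ | s ≤ |t|}).toReal ≤ qR := by
        apply ENNReal.toReal_mono (measure_ne_top _ _)
        apply measure_mono
        intro t ht
        exact le_trans hthr ht
      have h0 : 0 ≤ (ν {t : ℝ | s ≤ |t|}).toReal := ENNReal.toReal_nonneg
      calc ε ≤ s ^ 4 * (ν {t | s ≤ |t|}).toReal := hstail
      _ ≤ ((K + 3) ^ 4 * ((n : ℝ) + 2) ^ 2) * (ν {t | s ≤ |t|}).toReal := by nlinarith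
      _ ≤ (K + 3) ^ 4 * ((n : ℝ) + 2) ^ 2 * qR := by nlinarith [mul_le_mul_of_nonneg_left hmono (by positivity : (0:ℝ) ≤ (K + 3) ^ 4 * ((n : ℝ) + 2) ^ 2)]
    -- upper bound on δR
    have hδlow : δR ≤ 1 / (2 * (n : ℝ)) := by
      have h1 := cheb_tail ν' hν'_int2 (K * Real.sqrt n) (by positivity)
      have h2 : (K * Real.sqrt n) ^ 2 = K ^ 2 * n := by
        rw [mul_pow, Real.sq_sqrt hnRpos.le]
      rw [h2, hKsq] at h1
      rw [← hδRdef, ← hE2] at h1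
      calc δR ≤ E2 / ((2 * E2 + 2) * n) := h1
      _ ≤ 1 / (2 * (n : ℝ)) := by
          rw [div_le_div_iff₀ (by positivity) (by positivity)]
          nlinarith
    -- Finsets of indices
    set diagS : Finset {p : ℕ × ℕ // p.1 ≤ p.2} :=
      ((Finset.range n).image fun i => (i, i)).subtype fun p => p.1 ≤ p.2 with hdiagSdef
    set offS : Finset {p : ℕ × ℕ // p.1 ≤ p.2} :=
      ((Finset.range m) ×ˢ (Finset.Ico m n)).subtype fun p => p.1 ≤ p.2 with hoffSdef
    set B1 : Set ℝ := {t : ℝ | |t| < K * Real.sqrt n} with hB1def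
    set B2 : Set ℝ := {t : ℝ | |t| < (K + 3) * Real.sqrt n} with hB2def
    have hB1meas : MeasurableSet B1 := measurableSet_lt measurable_id.abs measurable_const
    have hB2meas : MeasurableSet B2 := measurableSet_lt measurable_id.abs measurable_const
    clear_value B1 B2
    set f : {p : ℕ × ℕ // p.1 ≤ p.2} → Set Ω :=
      fun p => x p.1.1 p.1.2 ⁻¹' (if p.1.1 = p.1.2 then B1 else B2) with hfdef
    have hfB : ∀ p : {p : ℕ × ℕ // p.1 ≤ p.2}, MeasurableSet (if p.1.1 = p.1.2 then B1 else B2) := by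
      intro p; split <;> assumption
    have hfmeas : ∀ p, MeasurableSet (f p) := fun p => (hmeas _ _) (hfB p)
    have hfcomap : ∀ p : {p : ℕ × ℕ // p.1 ≤ p.2},
        MeasurableSet[MeasurableSpace.comap (x p.1.1 p.1.2) inferInstance] (f p) :=
      fun p => ⟨_, hfB p, rfl⟩
    clear_value f
    -- membership facts
    have hdiag_mem : ∀ p : {p : ℕ × ℕ // p.1 ≤ p.2},
        p ∈ diagS ↔ ∃ k, k < n ∧ p.1 = (k, k) := by
      intro p
      rw [hdiagSdef, Finset.mem_subtype, Finset.mem_image]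
      constructor
      · rintro ⟨k, hk, hp⟩; exact ⟨k, Finset.mem_range.1 hk, hp.symm⟩
      · rintro ⟨k, hk, hp⟩; exact ⟨k, Finset.mem_range.2 hk, hp.symm⟩
    have hoff_mem : ∀ p : {p : ℕ × ℕ // p.1 ≤ p.2},
        p ∈ offS ↔ p.1.1 < m ∧ m ≤ p.1.2 ∧ p.1.2 < n := by
      intro p
      rw [hoffSdef, Finset.mem_subtype, Finset.mem_product, Finset.mem_range, Finset.mem_Ico]
    have hoff_ne : ∀ p ∈ offS, p.1.1 ≠ p.1.2 := by
      intro p hp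
      rw [hoff_mem] at hp
      omega
    have hdisj : Disjoint diagS offS := by
      rw [Finset.disjoint_left]
      intro p hpd hpo
      obtain ⟨k, _, hk⟩ := (hdiag_mem p).1 hpd
      have := hoff_ne p hpo
      rw [hk] at this
      exact this rfl
    -- cards
    have hdiag_filter : ∀ p ∈ (Finset.range n).image fun i => (i, i),
        p.1 ≤ p.2 := by
      rintro ⟨a, b⟩ hab
      rw [Finset.mem_image] at hab
      obtain ⟨k, _, hk⟩ := hab
      simp only [Prod.mk.injEq] at hk
      omega
    have hoff_filter : ∀ p ∈ (Finset.range m) ×ˢ (Finset.Ico m n),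
        p.1 ≤ p.2 := by
      rintro ⟨a, b⟩ hab
      rw [Finset.mem_product, Finset.mem_range, Finset.mem_Ico] at hab
      omega
    have hdiag_card : diagS.card = n := by
      rw [hdiagSdef, Finset.subtype, Finset.card_map, Finset.card_attach,
        Finset.filter_true_of_mem hdiag_filter,
        Finset.card_image_of_injective _ (fun a b h => by simpa using congrArg Prod.fst h),
        Finset.card_range]
    have hoff_card : offS.card = m * m := by
      rw [hoffSdef, Finset.subtype, Finset.card_map, Finset.card_attach,
        Finset.filter_true_of_mem hoff_filter,
        Finset.card_product, Finset.card_range, Nat.card_Ico]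
      congr 1
      omega
    clear_value diagS offS
    clear_value qR δR
    -- individual probabilities
    have hPdiag : ∀ p ∈ diagS, (ℙ (f p)).toReal = 1 - δR := by
      intro p hp
      obtain ⟨k, hkn, hk⟩ := (hdiag_mem p).1 hp
      have h1 : f p = x k k ⁻¹' B1 := by
        rw [hfdef]
        simp [hk]
      rw [h1, ← Measure.map_apply (hmeas k k) hB1meas, hlawDiag k, hB1def, hδRdef]
      exact prob_pre_lt ν' _
    have hPoff : ∀ p ∈ offS, (ℙ (f p)).toReal = 1 - qR := by
      intro p hp
      have hne := hoff_ne p hp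
      have hlt : p.1.1 < p.1.2 := lt_of_le_of_ne p.2 hne
      have h1 : f p = x p.1.1 p.1.2 ⁻¹' B2 := by
        rw [hfdef]
        simp only [if_neg hne]
      rw [h1, ← Measure.map_apply (hmeas _ _) hB2meas, hlawOff _ _ hlt, hB2def, hqRdef]
      exact prob_pre_lt ν _
    -- independence products
    have hPD : (ℙ (⋂ p ∈ diagS, f p)).toReal = (1 - δR) ^ n := by
      rw [hindep.meas_biInter (fun p _ => hfcomap p), ENNReal.toReal_prod]
      rw [Finset.prod_congr rfl hPdiag, Finset.prod_const, hdiag_card]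
    have hPDB : (ℙ (⋂ p ∈ diagS ∪ offS, f p)).toReal = (1 - δR) ^ n * (1 - qR) ^ (m * m) := by
      rw [hindep.meas_biInter (fun p _ => hfcomap p), ENNReal.toReal_prod]
      rw [Finset.prod_union hdisj]
      rw [Finset.prod_congr rfl hPdiag, Finset.prod_congr rfl hPoff]
      rw [Finset.prod_const, Finset.prod_const, hdiag_card, hoff_card]
    -- events
    set D : Set Ω := ⋂ p ∈ diagS, f p with hDdef
    set Bs : Set Ω := ⋂ p ∈ offS, f p with hBsdef
    have hBsmeas : MeasurableSet Bs :=
      MeasurableSet.biInter (Finset.countable_toSet _) fun p _ => hfmeas p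
    have hsplit : (⋂ p ∈ diagS ∪ offS, f p) = D ∩ Bs := by
      rw [hDdef, hBsdef]
      ext ω
      simp only [Set.mem_iInter, Set.mem_inter_iff, Finset.mem_union]
      constructor
      · intro h; exact ⟨fun p hp => h p (Or.inl hp), fun p hp => h p (Or.inr hp)⟩
      · rintro ⟨h1, h2⟩ p hp
        rcases hp with hp | hp
        · exact h1 p hp
        · exact h2 p hp
    set E : Set Ω := D \ Bs with hEdef
    clear_value D Bs E
    have hPE : (ℙ E).toReal = (1 - δR) ^ n * (1 - (1 - qR) ^ (m * m)) := by
      have h0 := measure_inter_add_diff (μ := ℙ) D hBsmeas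
      have h1 : (ℙ (D ∩ Bs)).toReal + (ℙ (D \ Bs)).toReal = (ℙ D).toReal := by
        rw [← ENNReal.toReal_add (measure_ne_top _ _) (measure_ne_top _ _), h0]
      rw [← hsplit] at h1
      rw [hPDB, hPD] at h1
      rw [hEdef]
      have h2 : (ℙ (D \ Bs)).toReal
          = (1 - δR) ^ n - (1 - δR) ^ n * (1 - qR) ^ (m * m) := by
        linarith only [h1]
      rw [h2]; ring
    -- E is a subset of the target event
    have hsubset : E ⊆ {ω | 3 ≤ maxEig (wignerMat x n ω)} := by
      rw [hEdef]
      rintro ω ⟨hD, hB⟩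
      rw [hBsdef] at hB
      simp only [Set.mem_iInter, not_forall] at hB
      obtain ⟨p, hp, hnp⟩ := hB
      have hpm := (hoff_mem p).1 hp
      have hne := hoff_ne p hp
      have hfp : f p = x p.1.1 p.1.2 ⁻¹' B2 := by rw [hfdef]; simp only [if_neg hne]
      rw [hfp] at hnp
      have hoffb : (K + 3) * Real.sqrt n ≤ |x p.1.1 p.1.2 ω| := by
        have := hnp
        simp only [Set.mem_preimage, hB2def, Set.mem_setOf_eq, not_lt] at this
        exact this
      have hdiagb : ∀ k < n, |x k k ω| < K * Real.sqrt n := by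
        intro k hk
        have hpk : (⟨(k, k), le_refl k⟩ : {p : ℕ × ℕ // p.1 ≤ p.2}) ∈ diagS :=
          (hdiag_mem _).2 ⟨k, hk, rfl⟩
        rw [hDdef] at hD
        simp only [Set.mem_iInter] at hD
        have := hD _ hpk
        rw [hfdef] at this
        simp only [if_pos rfl, Set.mem_preimage, hB1def, Set.mem_setOf_eq] at this
        exact this
      exact event_maxEig x n ω K hKpos.le p.1.1 p.1.2 (lt_of_lt_of_le hpm.1 hpm.2.1)
        hpm.2.2 hoffb hdiagb
    clear hPD hPDB hsplit hPdiag hPoff hfB hfmeas hfcomap hdiag_mem hoff_mem hoff_ne hdisj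
    clear hdiag_filter hoff_filter hdiag_card hoff_card hB1meas hB2meas hBsmeas
    clear hfdef hB1def hB2def hDdef hBsdef hindep hlawOff hlawDiag htail hfreq hmeas
    clear hν_int1 hν_mean hν_int2 hν_var hν'_int1 hν'_mean hν'_int2
    -- numeric bounds
    have hhalf : (1 : ℝ) / 2 ≤ (1 - δR) ^ n := by
      apply half_le_pow _ _ hδnn hδ1
      have h5 := mul_le_mul_of_nonneg_left hδlow (le_of_lt hnRpos)
      have h6 : (n : ℝ) * (1 / (2 * n)) = 1 / 2 := by
        have hne : (n : ℝ) ≠ 0 := ne_of_gt hnRpos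
        field_simp
      linarith
    have hβm : β ≤ (m * m : ℕ) * qR := by
      have h1 : ε / ((K + 3) ^ 4 * ((n : ℝ) + 2) ^ 2) ≤ qR := by
        rw [div_le_iff₀ (by positivity)]
        linarith only [hqlow]
      have h2 : ((m * m : ℕ) : ℝ) = (m : ℝ) * m := by push_cast; ring
      rw [h2]
      have h3 : (n : ℝ) + 2 = 2 * m + 2 := by rw [hnR]
      rw [hβdef]
      have h4 : ((K + 3) ^ 4 * ((n : ℝ) + 2) ^ 2) ≤ (m : ℝ) * m * (16 * (K + 3) ^ 4) := by
        rw [h3]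
        have := sq_ratio_bound (m : ℝ) ((K + 3) ^ 4) hmR (by positivity)
        linarith only [this]
      calc ε / (16 * (K + 3) ^ 4)
          = ((m : ℝ) * m) * (ε / ((m : ℝ) * m * (16 * (K + 3) ^ 4))) := by
            field_simp
      _ ≤ ((m : ℝ) * m) * (ε / ((K + 3) ^ 4 * ((n : ℝ) + 2) ^ 2)) := by
            apply mul_le_mul_of_nonneg_left _ (by positivity)
            apply div_le_div_of_nonneg_left hε.le (by positivity) h4
      _ ≤ ((m : ℝ) * m) * qR := mul_le_mul_of_nonneg_left h1 (by positivity)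
    have hpow : (1 - qR) ^ (m * m) ≤ 1 / (1 + β) := by
      apply one_sub_pow_le _ _ hqnn hq1 _ hβpos.le
      exact hβm
    have hfinal : c ≤ (ℙ E).toReal := by
      rw [hPE, hcdef]
      have h1 : β / (1 + β) ≤ 1 - (1 - qR) ^ (m * m) := by
        have : β / (1 + β) = 1 - 1 / (1 + β) := by field_simp; ring
        rw [this]
        linarith
      have h2 : 0 ≤ β / (1 + β) := by positivity
      have h3 : (0:ℝ) ≤ (1 - δR) ^ n := by positivity
      calc (1 / 2) * (β / (1 + β)) ≤ (1 - δR) ^ n * (β / (1 + β)) :=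
          mul_le_mul_of_nonneg_right hhalf h2
      _ ≤ (1 - δR) ^ n * (1 - (1 - qR) ^ (m * m)) :=
          mul_le_mul_of_nonneg_left h1 h3
    refine ⟨n, hnM, ?_⟩
    calc c ≤ (ℙ E).toReal := hfinal
    _ ≤ (ℙ {ω | 3 ≤ maxEig (wignerMat x n ω)}).toReal :=
        ENNReal.toReal_mono (measure_ne_top _ _) (measure_mono hsubset)
  refine lt_of_lt_of_le hcpos (le_limsup_of_frequently_le ?_ ?_)
  · exact frequently_atTop.2 key
  · exact isBoundedUnder_of ⟨1, fun N => hb1 _⟩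
end

section
/- For every z ∈ ℂ with Im z > 0 there exists a unique m ∈ ℂ with Im m > 0 satisfying m + 1/(z + m) = 0 (equivalently, m² + zm + 1 = 0). -/
private lemma quad_of_eq (z m : ℂ) (hm : 0 < m.im) (h : m + 1 / (z + m) = 0)
    (hz : 0 < z.im) : m ^ 2 + z * m + 1 = 0 := by
  have hne : z + m ≠ 0 := by
    intro h0
    have : (z + m).im = 0 := by rw [h0]; simp
    simp [Complex.add_im] at this
    linarith
  field_simp at h
  linear_combination h

private lemma eq_of_quad (z m : ℂ) (hm : 0 < m.im) (hq : m ^ 2 + z * m + 1 = 0)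
    (hz : 0 < z.im) : m + 1 / (z + m) = 0 := by
  have hne : z + m ≠ 0 := by
    intro h0
    have : (z + m).im = 0 := by rw [h0]; simp
    simp [Complex.add_im] at this
    linarith
  field_simp
  linear_combination hq

private lemma other_root_neg (z m₁ m₂ : ℂ) (h1 : 0 < m₁.im)
    (q1 : m₁ ^ 2 + z * m₁ + 1 = 0) (q2 : m₂ ^ 2 + z * m₂ + 1 = 0)
    (hne : m₁ ≠ m₂) : m₂.im < 0 := by
  have hsum : m₁ + m₂ = -z := by
    have h : (m₁ - m₂) * (m₁ + m₂ + z) = 0 := by linear_combination q1 - q2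
    rcases mul_eq_zero.mp h with h | h
    · exact absurd (sub_eq_zero.mp h) hne
    · linear_combination h
  have hprod : m₁ * m₂ = 1 := by linear_combination -q1 + m₁ * hsum
  have hm1 : m₁ ≠ 0 := by
    intro h0; rw [h0] at hprod; simp at hprod
  have hm2 : m₂ = m₁⁻¹ := by
    field_simp
    linear_combination hprod
  rw [hm2, Complex.inv_im]
  have : 0 < Complex.normSq m₁ := Complex.normSq_pos.mpr hm1
  exact div_neg_of_neg_of_pos (by linarith) this

/-- **Existence and uniqueness of the Stieltjes transform of the semicircle law.**
For every `z ∈ ℂ` with `Im z > 0` there exists a unique `m ∈ ℂ` with `Im m > 0`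
satisfying the self-consistent equation `m + 1/(z + m) = 0`. -/
theorem stmt_9 (z : ℂ) (hz : 0 < z.im) :
    ∃! m : ℂ, 0 < m.im ∧ m + 1 / (z + m) = 0 := by
  obtain ⟨w, hw⟩ := IsAlgClosed.exists_pow_nat_eq (z ^ 2 - 4) (n := 2) (by norm_num)
  set r : ℂ := (-z + w) / 2 with hr
  set r' : ℂ := (-z - w) / 2 with hr'
  have hsum : r + r' = -z := by rw [hr, hr']; ring
  have hprod : r * r' = 1 := by rw [hr, hr']; linear_combination -hw / 4
  have hq : r ^ 2 + z * r + 1 = 0 := by linear_combination r * hsum - hprod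
  have hq' : r' ^ 2 + z * r' + 1 = 0 := by linear_combination r' * hsum - hprod
  have hr0 : r ≠ 0 := by intro h0; rw [h0] at hprod; simp at hprod
  have hrinv : r' = r⁻¹ := by field_simp; linear_combination hprod
  have himsum : r.im + r'.im = -z.im := by
    have := congrArg Complex.im hsum; simpa using this
  have hne0 : r.im ≠ 0 := by
    intro h0
    have : r'.im = 0 := by rw [hrinv, Complex.inv_im, h0]; simp
    rw [h0, this] at himsum; simp at himsum; linarith
  have hns : 0 < Complex.normSq r := Complex.normSq_pos.mpr hr0
  rcases hne0.lt_or_gt with h | h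
  · -- r.im < 0, so r'.im > 0
    have h' : 0 < r'.im := by
      rw [hrinv, Complex.inv_im]
      exact div_pos (by linarith) hns
    refine ⟨r', ⟨h', eq_of_quad z r' h' hq' hz⟩, ?_⟩
    intro y ⟨hy, hyeq⟩
    by_contra hne
    have := other_root_neg z r' y h' hq' (quad_of_eq z y hy hyeq hz) (Ne.symm hne)
    linarith
  · refine ⟨r, ⟨h, eq_of_quad z r h hq hz⟩, ?_⟩
    intro y ⟨hy, hyeq⟩
    by_contra hne
    have := other_root_neg z r y h hq (quad_of_eq z y hy hyeq hz) (Ne.symm hne)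
    linarith
end

section
/- There exists a universal constant C ≥ 1 such that for every z = E + iη with |E| ≤ 5 and 0 < η ≤ 10, writing κ := ||E| − 2|: C^{−1} ≤ |m_sc(z)| ≤ C and C^{−1}√(κ + η) ≤ |1 − m_sc(z)²| ≤ C√(κ + η). -/
private lemma le_of_sq_le_sq' {a b : ℝ} (hb : 0 ≤ b) (h : a^2 ≤ b^2) (ha : 0 ≤ a) : a ≤ b := by
  nlinarith

private lemma keyP (E η a k : ℝ) (hη : 0 < η) (hη' : η ≤ 10)
    (ha0 : 0 ≤ a) (ha5 : a ≤ 5) (haE : a^2 = E^2)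
    (hk0 : 0 ≤ k) (hk2 : k^2 = (a-2)^2) :
    (k + η)^2 ≤ ((E-2)^2+η^2)*((E+2)^2+η^2) ∧
    ((E-2)^2+η^2)*((E+2)^2+η^2) ≤ 169*(k+η)^2 := by
  have hexp : ((E-2)^2+η^2)*((E+2)^2+η^2) = k^2*(a+2)^2 + η^2*(2*a^2+8) + η^4 := by
    nlinarith [sq_nonneg E, sq_nonneg a]
  rw [hexp]
  have ha25 : a^2 ≤ 25 := by nlinarith [mul_nonneg ha0 (by linarith : (0:ℝ) ≤ 5 - a)]
  have h1 : k^2*(a+2)^2 ≤ k^2*49 := by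
    have : (a+2)^2 ≤ 49 := by nlinarith
    exact mul_le_mul_of_nonneg_left this (sq_nonneg k)
  have h2 : η^2*(2*a^2+8) ≤ η^2*58 :=
    mul_le_mul_of_nonneg_left (by linarith) (sq_nonneg η)
  have h3 : η^4 ≤ 100*η^2 := by
    have : η^2 ≤ 100 := by nlinarith
    nlinarith [sq_nonneg η]
  constructor
  · nlinarith [sq_nonneg (k-η), mul_nonneg (mul_nonneg hk0 hk0) ha0, sq_nonneg k, sq_nonneg η, mul_nonneg (mul_nonneg (mul_nonneg hη.le hη.le) ha0) ha0]
  · nlinarith [mul_nonneg hk0 hη.le, sq_nonneg k, sq_nonneg η]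

/-- There is a universal constant `C ≥ 1` such that for `z = E + iη` with `|E| ≤ 5`,
`0 < η ≤ 10`, and `κ = ||E| - 2|`, the Stieltjes transform `m = m_sc(z)` (the unique
solution of `m + 1/(z+m) = 0` with `Im m > 0`) satisfies `|m| ∼ 1` and
`|1 - m²| ∼ √(κ + η)`. -/
theorem stmt_11 :
    ∃ C : ℝ, 1 ≤ C ∧ ∀ E η : ℝ, |E| ≤ 5 → 0 < η → η ≤ 10 →
      ∀ m : ℂ, 0 < m.im → m + 1 / (((E : ℂ) + η * Complex.I) + m) = 0 →
        (C⁻¹ ≤ ‖m‖ ∧ ‖m‖ ≤ C) ∧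
        (C⁻¹ * Real.sqrt (|(|E| - 2)| + η) ≤ ‖1 - m ^ 2‖ ∧
          ‖1 - m ^ 2‖ ≤ C * Real.sqrt (|(|E| - 2)| + η)) := by
  refine ⟨16, by norm_num, fun E η hE hη hη10 m him hm => ?_⟩
  set z : ℂ := (E : ℂ) + η * Complex.I with hz
  have hzim : z.im = η := by simp [hz]
  have hw : z + m ≠ 0 := by
    intro h
    have : (z + m).im = 0 := by rw [h]; simp
    simp [hzim] at this
    linarith
  have key : m^2 + z*m + 1 = 0 := by
    field_simp at hm
    linear_combination hm
  have hmw : m * (z + m) = -1 := by linear_combination key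
  have hst : Complex.normSq m * Complex.normSq (z + m) = 1 := by
    have := congrArg Complex.normSq hmw
    simpa [map_mul] using this
  have hm0 : m ≠ 0 := by
    intro h; rw [h] at hmw; simp at hmw
  have hs0 : 0 < Complex.normSq m := Complex.normSq_pos.mpr hm0
  have ht0 : 0 < Complex.normSq (z + m) := Complex.normSq_pos.mpr hw
  have hminv : m = -((z + m)⁻¹) := by
    field_simp
    linear_combination -hmw + 2*key
  have himeq : m.im * Complex.normSq (z + m) = η + m.im := by
    have h1 : m.im = (z + m).im / Complex.normSq (z + m) := by
      conv_lhs => rw [hminv]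
      simp [Complex.inv_im]
      ring
    have h2 : (z + m).im = η + m.im := by simp [hzim]
    rw [h2] at h1
    field_simp at h1
    linarith [h1]
  have hsle1 : Complex.normSq m ≤ 1 := by
    nlinarith [himeq, hst, him, hη, hs0, ht0]
  have habs_le : ‖m‖ ≤ 1 := by
    have h := Complex.sq_norm m
    nlinarith [norm_nonneg m]
  -- lower bound on |m|
  have habsmul : ‖m‖ * ‖z + m‖ = 1 := by
    rw [← norm_mul, hmw]; simp
  have hzabs : ‖z‖ ≤ 15 := by
    calc ‖z‖ ≤ ‖(E : ℂ)‖ + ‖(η:ℂ) * Complex.I‖ :=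
          norm_add_le _ _
      _ = |E| + |η| := by simp [map_mul]
      _ ≤ 15 := by rw [abs_of_pos hη]; linarith
  have hwabs : ‖z + m‖ ≤ 16 := by
    calc ‖z + m‖ ≤ ‖z‖ + ‖m‖ := norm_add_le _ _
      _ ≤ 16 := by linarith
  have habs_ge : (16:ℝ)⁻¹ ≤ ‖m‖ := by
    nlinarith [norm_nonneg m, norm_nonneg (z + m)]
  refine ⟨⟨habs_ge, by linarith⟩, ?_⟩
  -- the 1 - m² part
  have key2 : (1 - m^2)^2 = m^2 * ((z - 2) * (z + 2)) := by
    linear_combination (m^2 - z*m + 1) * key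
  set X := ‖1 - m^2‖ with hX
  set u := ‖z - 2‖ with hu
  set v := ‖z + 2‖ with hv
  have hXsq : X^2 = (‖m‖)^2 * (u * v) := by
    rw [hX, hu, hv]
    calc (‖1 - m^2‖)^2 = ‖(1 - m^2)^2‖ := by rw [norm_pow]
      _ = ‖m^2 * ((z-2)*(z+2))‖ := by rw [key2]
      _ = (‖m‖)^2 * (‖z-2‖ * ‖z+2‖) := by
          simp [map_mul, map_pow]
  have husq : u^2 = (E-2)^2 + η^2 := by
    rw [hu, Complex.sq_norm, Complex.normSq_apply]
    simp [hz]
    ring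
  have hvsq : v^2 = (E+2)^2 + η^2 := by
    rw [hv, Complex.sq_norm, Complex.normSq_apply]
    simp [hz]
    ring
  set k := |(|E| - 2)| with hk
  have hk0 : 0 ≤ k := abs_nonneg _
  have hkη : 0 ≤ k + η := by linarith
  obtain ⟨hP1, hP2⟩ := keyP E η |E| k hη hη10 (abs_nonneg E) hE (sq_abs E) hk0 (sq_abs _)
  have hu0 : 0 ≤ u := norm_nonneg _
  have hv0 : 0 ≤ v := norm_nonneg _
  have huv0 : 0 ≤ u * v := mul_nonneg hu0 hv0
  have huvsq : (u*v)^2 = ((E-2)^2+η^2)*((E+2)^2+η^2) := by rw [mul_pow, husq, hvsq]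
  have huv_low : k + η ≤ u * v :=
    le_of_sq_le_sq' huv0 (by rw [huvsq]; exact hP1) hkη
  have huv_up : u * v ≤ 13 * (k + η) :=
    le_of_sq_le_sq' (by linarith) (by rw [huvsq]; nlinarith) huv0
  have hX0 : 0 ≤ X := norm_nonneg _
  have hsqk : Real.sqrt (k + η) ^ 2 = k + η := Real.sq_sqrt hkη
  have hsq0 : 0 ≤ Real.sqrt (k + η) := Real.sqrt_nonneg _
  have habsm2 : (16:ℝ)⁻¹^2 ≤ (‖m‖)^2 :=
    pow_le_pow_left₀ (by norm_num) habs_ge 2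
  have habsm1 : (‖m‖)^2 ≤ 1 := by
    have := pow_le_pow_left₀ (norm_nonneg m) habs_le 2
    simpa using this
  constructor
  · apply le_of_sq_le_sq' hX0 _ (by positivity)
    rw [mul_pow, hsqk, hXsq]
    have h1 : (16:ℝ)⁻¹^2 * (k+η) ≤ (‖m‖)^2 * (k+η) :=
      mul_le_mul_of_nonneg_right habsm2 hkη
    have h2 : (‖m‖)^2 * (k+η) ≤ (‖m‖)^2 * (u*v) :=
      mul_le_mul_of_nonneg_left huv_low (sq_nonneg _)
    linarith
  · apply le_of_sq_le_sq' (by positivity) _ hX0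
    rw [mul_pow, hsqk, hXsq]
    have h1 : (‖m‖)^2 * (u*v) ≤ 1 * (u*v) :=
      mul_le_mul_of_nonneg_right habsm1 huv0
    have h16 : (16:ℝ)^2 = 256 := by norm_num
    rw [h16]
    linarith
end

section
/- There exists a universal constant C ≥ 1 such that for every z = E + iη with |E| ≤ 5 and 0 < η ≤ 10, writing κ := ||E| − 2|: (i) if κ ≥ η and |E| ≥ 2, then C^{−1}·η/√(κ + η) ≤ Im m_sc(z) ≤ C·η/√(κ + η); (ii) if κ ≤ η or |E| ≤ 2, then C^{−1}√(κ + η) ≤ Im m_sc(z) ≤ C√(κ + η). -/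
private lemma sqle_aux (x y : ℝ) (hy : 0 ≤ y) (h : x^2 ≤ y^2) (hx : 0 ≤ x) : x ≤ y := by
  nlinarith [sq_nonneg (x-y), sq_nonneg (x+y)]

set_option maxHeartbeats 1000000 in
/-- There is a universal constant `C ≥ 1` such that for `z = E + iη` with `|E| ≤ 5`,
`0 < η ≤ 10`, and `κ = ||E| - 2|`, the imaginary part of the Stieltjes transform
`m = m_sc(z)` satisfies: `Im m ∼ η/√(κ+η)` if `κ ≥ η` and `|E| ≥ 2`, and
`Im m ∼ √(κ+η)` if `κ ≤ η` or `|E| ≤ 2`. -/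
theorem stmt_12 :
    ∃ C : ℝ, 1 ≤ C ∧ ∀ E η : ℝ, |E| ≤ 5 → 0 < η → η ≤ 10 →
      ∀ m : ℂ, 0 < m.im → m + 1 / (((E : ℂ) + η * Complex.I) + m) = 0 →
        ((η ≤ |(|E| - 2)| → 2 ≤ |E| →
          C⁻¹ * (η / Real.sqrt (|(|E| - 2)| + η)) ≤ m.im ∧
            m.im ≤ C * (η / Real.sqrt (|(|E| - 2)| + η))) ∧
        ((|(|E| - 2)| ≤ η ∨ |E| ≤ 2) →
          C⁻¹ * Real.sqrt (|(|E| - 2)| + η) ≤ m.im ∧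
            m.im ≤ C * Real.sqrt (|(|E| - 2)| + η))) := by
  refine ⟨2000, by norm_num, ?_⟩
  intro E η hE hη hη10 m hb hm
  set a := m.re with ha
  set b := m.im with hbdef
  -- extract real equations
  set w : ℂ := ((E : ℂ) + η * Complex.I) + m with hw
  have hw0 : w ≠ 0 := by
    intro h
    rw [h] at hm
    simp at hm
    have : b = 0 := by rw [hbdef, hm]; simp
    linarith
  have hmw : m * w = -1 := by
    have : m = -(1/w) := by linear_combination hm
    rw [this]; field_simp
  have hre := congrArg Complex.re hmw
  have him := congrArg Complex.im hmw
  simp [hw, Complex.mul_re, Complex.mul_im, Complex.add_re, Complex.add_im] at hre him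
  have hI : 2*a*b + E*b + η*a = 0 := by nlinarith [him]
  have hR : a^2 - b^2 + E*a - η*b + 1 = 0 := by nlinarith [hre]
  clear hre him hmw hw0 hm
  -- key algebraic identities
  have hS : (a^2+b^2)*(b+η) = b := by linear_combination a*hI - b*hR
  set u : ℝ := b*(b+η) with hu
  have hup : 0 < u := mul_pos hb (by linarith)
  have hu1 : u ≤ 1 := by
    have h1 : b*u ≤ b*1 := by
      have h2 : 0 ≤ a^2*(b+η) := mul_nonneg (sq_nonneg a) (by linarith)
      have h3 : b*u = b^2*(b+η) := by rw [hu]; ring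
      nlinarith only [hS, h2, h3]
    exact le_of_mul_le_mul_left h1 hb
  have hP : 4*u^2 + (η^2 + E^2 - 4)*u - η^2 = 0 := by
    have hPb : b*(4*u^2 + (η^2 + E^2 - 4)*u - η^2) = 0 := by
      rw [hu]
      linear_combination ((b+η)*(E*b - a*(2*b+η)))*hI + (2*b+η)^2*hS
    rcases mul_eq_zero.mp hPb with h | h
    · exact absurd h (ne_of_gt hb)
    · exact h
  clear hI hR hS
  have hb2u : b^2 ≤ u := by nlinarith only [hu, mul_nonneg hb.le hη.le]
  -- abbreviations
  set K : ℝ := |(|E| - 2)| with hK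
  set s : ℝ := Real.sqrt (K + η) with hsdef
  have hK0 : 0 ≤ K := abs_nonneg _
  have hK3 : K ≤ 3 := by
    rw [hK, abs_le]; constructor <;> [linarith [abs_nonneg E]; linarith]
  have hT0 : 0 < K + η := by linarith
  have hs2 : s^2 = K + η := Real.sq_sqrt hT0.le
  have hs0 : 0 < s := Real.sqrt_pos.mpr hT0
  have hs4 : s ≤ 4 := by nlinarith only [hs2, hK3, hη10, hs0]
  have hηs2 : η ≤ s^2 := by rw [hs2]; linarith
  have hD7 : |E^2 - 4| ≤ 7*K := by
    have h1 : E^2 - 4 = (|E|-2)*(|E|+2) := by rw [← sq_abs E]; ring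
    rw [h1, abs_mul, abs_of_nonneg (by linarith [abs_nonneg E] : (0:ℝ) ≤ |E|+2)]
    have h2 : |E| + 2 ≤ 7 := by linarith
    nlinarith only [abs_nonneg (|E|-2), h2, hK, le_refl (|(|E|-2)|)]
  have hD7' : E^2 - 4 ≤ 7*K := le_trans (le_abs_self _) hD7
  have hD7'' : -(7*K) ≤ E^2 - 4 := by
    have := (abs_le.mp hD7).1
    linarith
  -- global upper bound b ≤ 3 s
  have hbs : b ≤ 3*s := by
    by_contra h
    push_neg at h
    have h0 : 9*s^2 < b^2 := by nlinarith only [h, hs0, hb]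
    have h1 : 9*(K+η) < u := by linarith only [h0, hb2u, hs2]
    have hcoef : 4 - E^2 - η^2 ≤ 7*K := by linarith only [hD7'', sq_nonneg η]
    have h2 : (4 - E^2 - η^2)*u ≤ 7*K*u := mul_le_mul_of_nonneg_right hcoef hup.le
    have key : 4*u^2 ≤ η^2 + 7*K*u := by linarith only [hP, h2]
    have hη9 : η < u/9 := by linarith only [h1, hK0]
    have hK9 : K < u/9 := by linarith only [h1, hη]
    have hηu : η^2 < u^2/81 := by nlinarith only [hη9, hη, hup]
    have hKu : 7*K*u < 7*u^2/9 := by nlinarith only [hK9, hup]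
    linarith only [key, hηu, hKu, mul_pos hup hup]
  constructor
  · -- case (i)
    intro hηK hE2
    have hKe : K = |E| - 2 := by rw [hK]; exact abs_of_nonneg (by linarith)
    have hDge : 4*K ≤ E^2 - 4 := by
      nlinarith only [sq_abs E, hKe, sq_nonneg (|E|-2), hE2]
    have h0 : s^2*u = K*u + η*u := by rw [hs2]; ring
    have hupper : 2*s^2*u ≤ η^2 := by
      have h1 := mul_le_mul_of_nonneg_right hDge hup.le
      have h2 : η*u ≤ K*u := mul_le_mul_of_nonneg_right hηK hup.le
      linarith only [hP, h1, h2, h0, sq_nonneg u,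
        mul_nonneg (mul_nonneg hη.le hη.le) hup.le]
    have hη2s4 : η^2 ≤ s^2*s^2 := by nlinarith only [hηs2, hη]
    have hus : u ≤ s^2/2 := by
      have h1 : (2*s^2)*u ≤ (2*s^2)*(s^2/2) := by linarith only [hupper, hη2s4]
      exact le_of_mul_le_mul_left h1 (by positivity)
    have hlower : η^2 ≤ 19*s^2*u := by
      have h1 : (E^2-4)*u ≤ 7*(K*u) := by
        have := mul_le_mul_of_nonneg_right hD7' hup.le; linarith only [this]
      have h2 := mul_le_mul_of_nonneg_right
        (by nlinarith only [hη, hη10] : η^2 ≤ 10*η) hup.le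
      have h3 : η*u ≤ s^2*u := mul_le_mul_of_nonneg_right hηs2 hup.le
      have h4 : K*u ≤ s^2*u :=
        mul_le_mul_of_nonneg_right (by linarith only [hs2, hη] : K ≤ s^2) hup.le
      have h5 : 4*u^2 ≤ 2*(s^2*u) := by nlinarith only [hus, hup]
      linarith only [hP, h1, h2, h3, h4, h5]
    constructor
    · rw [show (2000:ℝ)⁻¹ * (η/s) = (η/s)/2000 by ring,
        div_le_iff₀ (by norm_num : (0:ℝ) < 2000), div_le_iff₀ hs0]
      -- goal : η ≤ b * 2000 * s
      rcases le_or_gt η b with hcase | hcase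
      · have h1 : u ≤ 2*b^2 := by nlinarith only [hu, hcase, hb]
        have h2 : η^2 ≤ 38*(s*b)^2 := by
          nlinarith only [hlower, mul_le_mul_of_nonneg_left h1 (by positivity : (0:ℝ) ≤ 19*s^2)]
        have h3 : η ≤ 7*(s*b) := by
          refine sqle_aux _ _ (by positivity) ?_ hη.le
          nlinarith only [h2, sq_nonneg (s*b)]
        nlinarith only [h3, mul_pos hs0 hb]
      · have h1 : u ≤ 2*b*η := by nlinarith only [hu, hcase.le, hb, hη]
        have h2 : η*η ≤ (38*s^2*b)*η := by
          nlinarith only [hlower, mul_le_mul_of_nonneg_left h1 (by positivity : (0:ℝ) ≤ 19*s^2)]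
        have h3 : η ≤ 38*s^2*b := le_of_mul_le_mul_right h2 hη
        have h4 : 38*s^2*b ≤ 152*(s*b) := by
          have h5 : 0 ≤ (4-s)*s*b :=
            mul_nonneg (mul_nonneg (by linarith only [hs4]) hs0.le) hb.le
          nlinarith only [h5]
        nlinarith only [h3, h4, mul_nonneg hs0.le hb.le]
    · rw [show (2000:ℝ)*(η/s) = 2000*η/s by ring, le_div_iff₀ hs0]
      -- goal : b * s ≤ 2000 * η
      have h2 : 2*(b*s)^2 ≤ η^2 := by
        nlinarith only [hupper, mul_le_mul_of_nonneg_left hb2u (by positivity : (0:ℝ) ≤ 2*s^2)]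
      have h3 : b*s ≤ η := by
        refine sqle_aux _ _ hη.le ?_ (mul_nonneg hb.le hs0.le)
        nlinarith only [h2, sq_nonneg (b*s)]
      linarith only [h3, hη]
  · -- case (ii)
    intro hyp
    have branchA : K ≤ η → s^2 ≤ 40*u := by
      intro hA
      have hcoef : η^2 + E^2 - 4 ≤ 17*η := by nlinarith only [hD7', hA, hη, hη10]
      have h20 : η ≤ 20*u := by
        by_contra h
        push_neg at h
        have h1 : (η^2+E^2-4)*u ≤ 17*(η*u) := by
          have := mul_le_mul_of_nonneg_right hcoef hup.le; linarith only [this]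
        have h2 : η*u < η*(η/20) := by nlinarith only [h, hη]
        have h3 : u^2 < (η/20)*u := by nlinarith only [h, hup]
        nlinarith only [hP, h1, h2, h3]
      linarith only [hs2, hA, h20]
    have branchB : |E| ≤ 2 → η ≤ K → s^2 ≤ 40*u := by
      intro hE2 hB
      have hKe : K = 2 - |E| := by
        rw [hK, abs_of_nonpos (by linarith : |E| - 2 ≤ 0)]; ring
      have hG2K : 2*K ≤ 4 - E^2 := by
        nlinarith only [sq_abs E, hKe, abs_nonneg E, hE2]
      rcases le_total η 1 with hη1 | hη1
      · have hηη : η^2 ≤ η := by nlinarith only [hη1, hη]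
        have hx : K ≤ 4-E^2-η^2 := by linarith only [hG2K, hB, hηη]
        have h1 : K*u ≤ (4-E^2-η^2)*u := mul_le_mul_of_nonneg_right hx hup.le
        have h4u : K ≤ 4*u := by nlinarith only [hP, h1, sq_nonneg η, hup]
        linarith only [hs2, hB, h4u, hup.le]
      · have hK2 : K ≤ 2 := by rw [hKe]; linarith [abs_nonneg E]
        have hη2' : η ≤ 2 := le_trans hB hK2
        have hηη2 : η^2 ≤ 2*η := by nlinarith only [hη2', hη]
        have hx : -2 ≤ 4-E^2-η^2 := by linarith only [hG2K, hB, hη1, hηη2]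
        have h03 : 3 ≤ 10*u := by
          by_contra h
          push_neg at h
          have h1 : (-2)*u ≤ (4-E^2-η^2)*u := mul_le_mul_of_nonneg_right hx hup.le
          have hη21 : 1 ≤ η^2 := by nlinarith only [hη1]
          have hu2 : u^2 < (3/10)*u := by nlinarith only [h, hup]
          linarith only [hP, h1, hη21, hu2, h]
        linarith only [hs2, hK2, hη2', h03]
    have hul : s^2 ≤ 40*u := by
      rcases le_total K η with h | h
      · exact branchA h
      · rcases hyp with h' | h'
        · exact branchA h'
        · exact branchB h' h
    constructor
    · rw [show (2000:ℝ)⁻¹ * s = s/2000 by ring, div_le_iff₀ (by norm_num : (0:ℝ) < 2000)]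
      -- goal : s ≤ b * 2000
      rcases le_or_gt η b with hcase | hcase
      · have h1 : u ≤ 2*b^2 := by nlinarith only [hu, hcase, hb]
        have h2 : s^2 ≤ 80*b^2 := by linarith only [hul, h1]
        have h3 : s ≤ 9*b := by
          refine sqle_aux _ _ (by positivity) ?_ hs0.le
          nlinarith only [h2, sq_nonneg b]
        linarith only [h3, hb]
      · have h1 : u ≤ 2*b*η := by nlinarith only [hu, hcase.le, hb, hη]
        have h2 : s^2 ≤ 80*(b*η) := by linarith only [hul, h1]
        have hη2s : η^2 ≤ 10*s^2 := by nlinarith only [hηs2, hη, hη10, sq_nonneg s]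
        by_contra h
        push_neg at h
        have h6 : 80*(b*η) < (s*η)/25 := by nlinarith only [h, hη]
        have h7 : s < η/25 := by nlinarith only [h2, h6, hs0]
        have h8 : 625*s^2 < η^2 := by nlinarith only [h7, hs0]
        nlinarith only [h8, hη2s, mul_pos hs0 hs0]
    · linarith only [hbs, hs0]
end

section
/- For every C > 0 there exists a constant D > 0, depending only on C, such that for all real numbers A and B with |A| ≤ C and B ≥ A² + 1, there exists a probability measure μ on ℝ supported in the interval [−DB, DB] whose first four moments are ∫x dμ = 0, ∫x² dμ = 1, ∫x³ dμ = A, and ∫x⁴ dμ = B. -/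
set_option maxHeartbeats 1000000


open MeasureTheory

lemma integrable_dirac_aux (f : ℝ → ℝ) (hf : Measurable f) (a : ℝ) :
    Integrable f (Measure.dirac a) := by
  refine ⟨hf.aestronglyMeasurable, ?_⟩
  rw [hasFiniteIntegral_def, lintegral_dirac]
  exact ENNReal.coe_lt_top

lemma integral_three_point (f : ℝ → ℝ) (hf : Measurable f) (a b c wa wb wc : ℝ)
    (hwa : 0 ≤ wa) (hwb : 0 ≤ wb) (hwc : 0 ≤ wc) :
    (∫ x, f x ∂(ENNReal.ofReal wa • Measure.dirac a + ENNReal.ofReal wb • Measure.dirac b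
        + ENNReal.ofReal wc • Measure.dirac c)) = wa * f a + wb * f b + wc * f c := by
  have hint : ∀ (w p : ℝ), Integrable f (ENNReal.ofReal w • Measure.dirac p) :=
    fun w p => (integrable_dirac_aux f hf p).smul_measure ENNReal.ofReal_ne_top
  rw [integral_add_measure ((hint wa a).add_measure (hint wb b)) (hint wc c),
    integral_add_measure (hint wa a) (hint wb b)]
  simp only [integral_smul_measure, integral_dirac, ENNReal.toReal_ofReal hwa,
    ENNReal.toReal_ofReal hwb, ENNReal.toReal_ofReal hwc, smul_eq_mul]

/-- For every `C > 0` there is `D > 0` depending only on `C` such that for all reals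
`A, B` with `|A| ≤ C` and `B ≥ A² + 1`, there exists a Borel probability measure `μ` on
`ℝ` supported in `[-DB, DB]` with moments `∫x dμ = 0`, `∫x² dμ = 1`, `∫x³ dμ = A`,
`∫x⁴ dμ = B`. -/
theorem stmt_14 (C : ℝ) (hC : 0 < C) :
    ∃ D : ℝ, 0 < D ∧ ∀ A B : ℝ, |A| ≤ C → A ^ 2 + 1 ≤ B →
      ∃ μ : Measure ℝ, IsProbabilityMeasure μ ∧
        μ (Set.Icc (-(D * B)) (D * B)) = 1 ∧
        (∫ x, x ∂μ) = 0 ∧ (∫ x, x ^ 2 ∂μ) = 1 ∧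
        (∫ x, x ^ 3 ∂μ) = A ∧ (∫ x, x ^ 4 ∂μ) = B := by
  refine ⟨2 * C + 3, by linarith, fun A B hA hB => ?_⟩
  obtain ⟨hAC1, hAC2⟩ := abs_le.mp hA
  have hB1 : (1 : ℝ) ≤ B := by nlinarith [sq_nonneg A]
  set r : ℝ := Real.sqrt (4 * B - 3 * A ^ 2) with hr_def
  have hr2 : r ^ 2 = 4 * B - 3 * A ^ 2 := by
    rw [hr_def, Real.sq_sqrt]; nlinarith [sq_nonneg A]
  have hr0 : (0 : ℝ) < r := by
    rw [hr_def]; apply Real.sqrt_pos.mpr; nlinarith [sq_nonneg A]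
  set s : ℝ := (r ^ 2 - A ^ 2) / 4 with hs_def
  have hsB : s = B - A ^ 2 := by rw [hs_def]; linarith
  have hs1 : (1 : ℝ) ≤ s := by rw [hsB]; linarith
  have hs0 : (0 : ℝ) < s := by linarith
  set a : ℝ := (A - r) / 2 with ha_def
  set b : ℝ := (A + r) / 2 with hb_def
  have haneg : a < 0 := by
    rw [ha_def]; nlinarith [sq_nonneg (r - A), sq_nonneg (r + A)]
  have hbpos : 0 < b := by
    rw [hb_def]; nlinarith [sq_nonneg (r - A), sq_nonneg (r + A)]
  set wa : ℝ := b / (s * r) with hwa_def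
  set wb : ℝ := (-a) / (s * r) with hwb_def
  set wc : ℝ := 1 - 1 / s with hwc_def
  have hwa0 : 0 ≤ wa := le_of_lt (div_pos hbpos (mul_pos hs0 hr0))
  have hwb0 : 0 ≤ wb := le_of_lt (div_pos (by linarith) (mul_pos hs0 hr0))
  have hwc0 : 0 ≤ wc := by
    rw [hwc_def]
    have : 1 / s ≤ 1 := by rw [div_le_one hs0]; exact hs1
    linarith
  have hsum : wa + wb + wc = 1 := by
    rw [hwa_def, hwb_def, hwc_def, ha_def, hb_def]
    field_simp
    ring
  have hsA2 : r ^ 2 - A ^ 2 ≠ 0 := by nlinarith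
  refine ⟨ENNReal.ofReal wa • Measure.dirac a + ENNReal.ofReal wb • Measure.dirac b
      + ENNReal.ofReal wc • Measure.dirac 0, ?_, ?_, ?_, ?_, ?_, ?_⟩
  · constructor
    simp only [Measure.add_apply, Measure.smul_apply, Measure.dirac_apply_of_mem
      (Set.mem_univ a), Measure.dirac_apply_of_mem (Set.mem_univ b),
      Measure.dirac_apply_of_mem (Set.mem_univ (0 : ℝ)), smul_eq_mul, mul_one]
    rw [← ENNReal.ofReal_add hwa0 hwb0, ← ENNReal.ofReal_add (by linarith) hwc0, hsum]
    simp
  · -- support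
    have hrB : r ≤ 2 * B := by nlinarith
    have hCB : 0 ≤ C * B - C := mul_nonneg hC.le (by linarith : (0:ℝ) ≤ B - 1) |>.trans_eq
      (by ring)
    have hDB : 0 ≤ (2 * C + 3) * B := by nlinarith
    have hamem : a ∈ Set.Icc (-((2 * C + 3) * B)) ((2 * C + 3) * B) := by
      constructor <;> rw [ha_def] <;> linarith [hCB]
    have hbmem : b ∈ Set.Icc (-((2 * C + 3) * B)) ((2 * C + 3) * B) := by
      constructor <;> rw [hb_def] <;> linarith [hCB]
    have h0mem : (0 : ℝ) ∈ Set.Icc (-((2 * C + 3) * B)) ((2 * C + 3) * B) :=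
      ⟨by linarith, by linarith⟩
    simp only [Measure.add_apply, Measure.smul_apply,
      Measure.dirac_apply_of_mem hamem, Measure.dirac_apply_of_mem hbmem,
      Measure.dirac_apply_of_mem h0mem, smul_eq_mul, mul_one]
    rw [← ENNReal.ofReal_add hwa0 hwb0, ← ENNReal.ofReal_add (by linarith) hwc0, hsum]
    simp
  · rw [integral_three_point (fun x => x) (by fun_prop) _ _ _ _ _ _ hwa0 hwb0 hwc0]
    rw [hwa_def, hwb_def, hwc_def, ha_def, hb_def, hs_def]
    field_simp
    ring
  · rw [integral_three_point (fun x => x ^ 2) (by fun_prop) _ _ _ _ _ _ hwa0 hwb0 hwc0]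
    rw [hwa_def, hwb_def, hwc_def, ha_def, hb_def, hs_def]
    field_simp
    ring
  · rw [integral_three_point (fun x => x ^ 3) (by fun_prop) _ _ _ _ _ _ hwa0 hwb0 hwc0]
    rw [hwa_def, hwb_def, hwc_def, ha_def, hb_def, hs_def]
    field_simp
    ring
  · rw [integral_three_point (fun x => x ^ 4) (by fun_prop) _ _ _ _ _ _ hwa0 hwb0 hwc0]
    have hB4 : B = (r ^ 2 + 3 * A ^ 2) / 4 := by linarith
    rw [hwa_def, hwb_def, hwc_def, ha_def, hb_def, hs_def, hB4]
    field_simp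
    ring
end

section
/- Let X be a real random variable with E X = 0, E X² = 1 and E X⁴ < ∞. Then E X⁴ ≥ 1 + (E X³)². -/
open MeasureTheory ProbabilityTheory

/-- If `X` is a real random variable with `E X = 0`, `E X² = 1` and finite fourth moment,
then `E X⁴ ≥ 1 + (E X³)²`. -/
theorem stmt_15 {Ω : Type} [MeasureSpace Ω] [IsProbabilityMeasure (ℙ : Measure Ω)]
    (X : Ω → ℝ) (hX : Measurable X)
    (h1 : Integrable X) (h2 : Integrable fun ω => (X ω) ^ 2)
    (h3 : Integrable fun ω => (X ω) ^ 3) (h4 : Integrable fun ω => (X ω) ^ 4)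
    (hmean : ∫ ω, X ω = 0) (hvar : ∫ ω, (X ω) ^ 2 = 1) :
    1 + (∫ ω, (X ω) ^ 3) ^ 2 ≤ ∫ ω, (X ω) ^ 4 := by
  set t : ℝ := ∫ ω, (X ω) ^ 3 with ht
  have key : 0 ≤ ∫ ω, (X ω ^ 2 - 1 - t * X ω) ^ 2 :=
    integral_nonneg fun ω => sq_nonneg _
  have heq : (fun ω => (X ω ^ 2 - 1 - t * X ω) ^ 2)
      = fun ω => ((X ω ^ 4 + (t ^ 2 - 2) * X ω ^ 2) + ((2 * t) * X ω - (2 * t) * X ω ^ 3)) + 1 := by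
    funext ω; ring
  have iA : Integrable (fun ω => X ω ^ 4 + (t ^ 2 - 2) * X ω ^ 2) := h4.add (h2.const_mul _)
  have iB : Integrable (fun ω => (2 * t) * X ω - (2 * t) * X ω ^ 3) :=
    (h1.const_mul _).sub (h3.const_mul _)
  have iC : Integrable (fun ω => (X ω ^ 4 + (t ^ 2 - 2) * X ω ^ 2) + ((2 * t) * X ω - (2 * t) * X ω ^ 3)) := iA.add iB
  rw [heq] at key
  rw [integral_add iC (integrable_const 1), integral_add iA iB,
      integral_add h4 (h2.const_mul _), integral_sub (h1.const_mul _) (h3.const_mul _),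
      MeasureTheory.integral_const_mul, MeasureTheory.integral_const_mul, MeasureTheory.integral_const_mul,
      hmean, hvar, ← ht, integral_const] at key
  simp at key
  nlinarith [key]
end
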